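/- Let Θ be a nonempty compact topological space and let C⁺(Θ) denote the set of continuous functions h : Θ → [0,∞) that are not identically zero, equipped with the supremum norm ‖·‖_∞; for h ∈ C⁺(Θ) write τ(h) = h/‖h‖_∞. Let h ∈ C⁺(Θ) and let ε be a real number with 0 < ε ≤ ‖h‖_∞. Then the set {τ(h') : h' ∈ C⁺(Θ), ‖h' − h‖_∞ < ε} is an open subset of the metric subspace {f ∈ C⁺(Θ) : ‖f‖_∞ = 1} (with the supremum metric). -/

import Mathlib

/-- The normalization map `τ(h) = h / ‖h‖∞` on nonnegative, not-identically-zero continuous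
functions on a nonempty compact space is open: the image under `τ` of the sup-norm ball of
radius `ε ≤ ‖h‖∞` around `h` is an open subset of the metric subspace of normalized
(nonnegative, sup-norm one) continuous functions. -/
theorem isOpen_image_of_normalization
    {Θ : Type*} [TopologicalSpace Θ] [CompactSpace Θ] [Nonempty Θ]
    (h : C(Θ, ℝ)) (h_nonneg : ∀ θ, 0 ≤ h θ) (h_ne : h ≠ 0)
    (ε : ℝ) (hε : 0 < ε) (hε' : ε ≤ ‖h‖) :
    IsOpen {f : {g : C(Θ, ℝ) // (∀ θ, 0 ≤ g θ) ∧ ‖g‖ = 1} |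
      ∃ h' : C(Θ, ℝ), (∀ θ, 0 ≤ h' θ) ∧ h' ≠ 0 ∧ ‖h' - h‖ < ε ∧
        (f : C(Θ, ℝ)) = ‖h'‖⁻¹ • h'} := by
  rw [Metric.isOpen_iff]
  rintro f ⟨h', h'_nonneg, h'_ne, h'_close, hf⟩
  have hc : (0:ℝ) < ‖h'‖ := norm_pos_iff.mpr h'_ne
  set c := ‖h'‖ with hcdef
  refine ⟨(ε - ‖h' - h‖) / c, div_pos (by linarith) hc, ?_⟩
  intro g hg
  have hdist : dist (g : C(Θ, ℝ)) (f : C(Θ, ℝ)) < (ε - ‖h' - h‖) / c := by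
    rw [Metric.mem_ball, Subtype.dist_eq] at hg
    exact hg
  have hcf : c • (f : C(Θ, ℝ)) = h' := by
    rw [hf, smul_smul, mul_inv_cancel₀ (ne_of_gt hc), one_smul]
  have hnorm : ‖c • (g : C(Θ, ℝ))‖ = c := by
    have h2 : ‖c • (g : C(Θ, ℝ))‖ = ‖c‖ * ‖(g : C(Θ, ℝ))‖ := norm_smul c (g : C(Θ, ℝ))
    rw [h2, Real.norm_eq_abs, abs_of_pos hc, g.2.2, mul_one]
  refine ⟨c • (g : C(Θ, ℝ)), fun θ => mul_nonneg hc.le (g.2.1 θ), ?_, ?_, ?_⟩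
  · intro h0
    exact hc.ne' (by rw [← hnorm, h0, norm_zero])
  · have h1 : ‖c • (g : C(Θ, ℝ)) - h'‖ = c * dist (g : C(Θ, ℝ)) (f : C(Θ, ℝ)) := by
      rw [← hcf, ← smul_sub, norm_smul, Real.norm_eq_abs, abs_of_pos hc, dist_eq_norm]
    calc ‖c • (g : C(Θ, ℝ)) - h‖ ≤ ‖c • (g : C(Θ, ℝ)) - h'‖ + ‖h' - h‖ :=
          norm_sub_le_norm_sub_add_norm_sub _ _ _
      _ < c * ((ε - ‖h' - h‖) / c) + ‖h' - h‖ := by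
          rw [h1]; exact add_lt_add_left (by exact (mul_lt_mul_iff_right₀ hc).mpr hdist) _
      _ = ε := by field_simp; ring
  · rw [hnorm, smul_smul, inv_mul_cancel₀ (ne_of_gt hc), one_smul]
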